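/- Let S be a finite set and ℓ : S → ℕ a function satisfying the Kraft–McMillan inequality ∑_{s∈S} 2^{-ℓ(s)} ≤ 1, with ℓ(s) ≥ 1 for all s. Let p > 0 and u > 0. Let (X_s)_{s∈S} and (Y_s)_{s∈S} be real random variables such that for each s and all v > 0, P[|X_s − Y_s| ≥ v·d(s)] ≤ 2·e^{-v²}, where d : S → (0,∞). Then P[∃ s ∈ S : |X_s − Y_s| > d(s)·√(ln(2^{ℓ(s)+1}/p) + u²)] ≤ p·e^{-u²}. -/

import Mathlib

open MeasureTheory

/-- Single-scale union-bound step: under the subgaussian increment condition and the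
Kraft–McMillan inequality for the codelengths ℓ, the probability that some deviation
|X_s − Y_s| exceeds d(s)·√(ln(2^{ℓ(s)+1}/p) + u²) is at most p·e^{-u²}. -/
theorem stmt4 {Ω : Type*} [MeasurableSpace Ω] (P : Measure Ω) [IsProbabilityMeasure P]
    {S : Type*} [Fintype S] (ℓ : S → ℕ) (hℓ1 : ∀ s, 1 ≤ ℓ s)
    (hKraft : ∑ s : S, (2 : ℝ) ^ (-(ℓ s : ℝ)) ≤ 1)
    (d : S → ℝ) (hd : ∀ s, 0 < d s)
    (p u : ℝ) (hp : 0 < p) (hu : 0 < u)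
    (X Y : S → Ω → ℝ)
    (hinc : ∀ s : S, ∀ v : ℝ, 0 < v →
      P {ω | v * d s ≤ |X s ω - Y s ω|} ≤ ENNReal.ofReal (2 * Real.exp (-v ^ 2))) :
    P {ω | ∃ s : S,
        d s * Real.sqrt (Real.log ((2 : ℝ) ^ ((ℓ s : ℝ) + 1) / p) + u ^ 2)
          < |X s ω - Y s ω|} ≤
      ENNReal.ofReal (p * Real.exp (-u ^ 2)) := by
  set A : S → ℝ := fun s => Real.log ((2 : ℝ) ^ ((ℓ s : ℝ) + 1) / p) + u ^ 2 with hA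
  have h2pos : ∀ s, (0:ℝ) < (2:ℝ) ^ ((ℓ s : ℝ) + 1) := fun s =>
    Real.rpow_pos_of_pos two_pos _
  have hc : ∀ s, 2 * Real.exp (-(A s)) = p * (2:ℝ) ^ (-(ℓ s : ℝ)) * Real.exp (-u ^ 2) := by
    intro s
    have hexp : Real.exp (-(A s)) = p / (2:ℝ) ^ ((ℓ s : ℝ) + 1) * Real.exp (-u ^ 2) := by
      have hT : (0:ℝ) < (2:ℝ) ^ ((ℓ s : ℝ) + 1) / p := div_pos (h2pos s) hp
      rw [hA]
      simp only [neg_add, Real.exp_add, Real.exp_neg, Real.exp_log hT]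
      field_simp
    rw [hexp, Real.rpow_neg (by norm_num : (0:ℝ) ≤ 2)]
    rw [Real.rpow_add two_pos, Real.rpow_one]
    have : ((2:ℝ) ^ ((ℓ s : ℝ))) ≠ 0 := (Real.rpow_pos_of_pos two_pos _).ne'
    field_simp
  have key : ∀ s, P {ω | d s * Real.sqrt (A s) < |X s ω - Y s ω|} ≤
      ENNReal.ofReal (p * (2:ℝ) ^ (-(ℓ s : ℝ)) * Real.exp (-u ^ 2)) := by
    intro s
    rw [← hc]
    rcases le_or_gt (A s) 0 with h | h
    · calc P {ω | d s * Real.sqrt (A s) < |X s ω - Y s ω|} ≤ 1 := prob_le_one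
        _ ≤ ENNReal.ofReal (2 * Real.exp (-(A s))) := by
            rw [ENNReal.one_le_ofReal]
            have : (1:ℝ) ≤ Real.exp (-(A s)) := by
              rw [← Real.exp_zero]; exact Real.exp_le_exp.2 (by linarith)
            nlinarith
    · have hv : 0 < Real.sqrt (A s) := Real.sqrt_pos.2 h
      have hsub : {ω | d s * Real.sqrt (A s) < |X s ω - Y s ω|} ⊆
          {ω | Real.sqrt (A s) * d s ≤ |X s ω - Y s ω|} := by
        intro ω hω; rw [Set.mem_setOf_eq, mul_comm]; exact (le_of_lt hω)
      calc P {ω | d s * Real.sqrt (A s) < |X s ω - Y s ω|} ≤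
          P {ω | Real.sqrt (A s) * d s ≤ |X s ω - Y s ω|} := measure_mono hsub
        _ ≤ ENNReal.ofReal (2 * Real.exp (-(Real.sqrt (A s)) ^ 2)) := hinc s _ hv
        _ = ENNReal.ofReal (2 * Real.exp (-(A s))) := by
            rw [Real.sq_sqrt h.le]
  calc P {ω | ∃ s : S, d s * Real.sqrt (A s) < |X s ω - Y s ω|}
      = P (⋃ s : S, {ω | d s * Real.sqrt (A s) < |X s ω - Y s ω|}) := by
        congr 1; ext ω; simp [Set.mem_iUnion]
    _ ≤ ∑' s : S, P {ω | d s * Real.sqrt (A s) < |X s ω - Y s ω|} := measure_iUnion_le _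
    _ = ∑ s : S, P {ω | d s * Real.sqrt (A s) < |X s ω - Y s ω|} := tsum_fintype _
    _ ≤ ∑ s : S, ENNReal.ofReal (p * (2:ℝ) ^ (-(ℓ s : ℝ)) * Real.exp (-u ^ 2)) :=
        Finset.sum_le_sum fun s _ => key s
    _ = ENNReal.ofReal (∑ s : S, p * (2:ℝ) ^ (-(ℓ s : ℝ)) * Real.exp (-u ^ 2)) := by
        rw [ENNReal.ofReal_sum_of_nonneg]
        intro s _
        have := Real.rpow_pos_of_pos (two_pos : (0:ℝ) < 2) (-(ℓ s : ℝ))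
        positivity
    _ ≤ ENNReal.ofReal (p * Real.exp (-u ^ 2)) := by
        apply ENNReal.ofReal_le_ofReal
        have : ∑ s : S, p * (2:ℝ) ^ (-(ℓ s : ℝ)) * Real.exp (-u ^ 2) =
            (p * Real.exp (-u ^ 2)) * ∑ s : S, (2:ℝ) ^ (-(ℓ s : ℝ)) := by
          rw [Finset.mul_sum]; apply Finset.sum_congr rfl; intro s _; ring
        rw [this]
        have hpe : 0 ≤ p * Real.exp (-u ^ 2) := by positivity
        nlinarith [hKraft]
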